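/- Let P and Q be polyhedra in ℝ^D (intersections of finitely many halfspaces) with E nonempty, and let p ∈ P ∖ E. Then there exist x, y ∈ ℝ^D such that the faces P_x and Q_y are nonempty and 1 − 1/κ(p)² ≤ c_F(aff₀(P_x), aff₀(Q_y))². The analogous statement holds when p ∈ P ∖ E is replaced by q ∈ Q' ∖ E. -/

import Mathlib

open scoped RealInnerProductSpace Pointwise
open Metric Filter

noncomputable section

/-- Distance between two sets. -/
def sDist {X : Type*} [MetricSpace X] (K₁ K₂ : Set X) : ℝ :=
  sInf (Set.image2 dist K₁ K₂)

/-- `y` is the nearest-point projection of `x` onto `C`. -/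
def IsProjOn {X : Type*} [MetricSpace X] (C : Set X) (x y : X) : Prop :=
  y ∈ C ∧ ∀ z ∈ C, dist x y ≤ dist x z

/-- A polyhedron: the intersection of finitely many halfspaces. -/
def IsPolyhedron {H : Type*} [NormedAddCommGroup H] [InnerProductSpace ℝ H]
    (P : Set H) : Prop :=
  ∃ (n : ℕ) (a : Fin n → H) (b : Fin n → ℝ), P = {x | ∀ i, ⟪a i, x⟫ ≤ b i}

/-- The face of `P` in direction `x`: the set of maximizers of `⟪x, ·⟫` over `P`. -/
def face {H : Type*} [NormedAddCommGroup H] [InnerProductSpace ℝ H]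
    (P : Set H) (x : H) : Set H :=
  {p ∈ P | ∀ q ∈ P, ⟪x, q⟫ ≤ ⟪x, p⟫}

/-- `aff₀ C`: the affine hull of `C` translated to contain the origin,
as a linear subspace. -/
def aff0 {H : Type*} [NormedAddCommGroup H] [InnerProductSpace ℝ H]
    (C : Set H) : Submodule ℝ H :=
  (affineSpan ℝ C).direction

/-- The cosine of the Friedrichs angle between two subspaces. -/
def friedrichs {H : Type*} [NormedAddCommGroup H] [InnerProductSpace ℝ H]
    (U V : Submodule ℝ H) : ℝ :=
  sSup {t | ∃ u ∈ U ⊓ (U ⊓ V)ᗮ, ∃ v ∈ V ⊓ (U ⊓ V)ᗮ,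
    ‖u‖ ≤ 1 ∧ ‖v‖ ≤ 1 ∧ t = ⟪u, v⟫}

section Aux
variable {H : Type*} [NormedAddCommGroup H] [InnerProductSpace ℝ H]

/-- intersection of kernels of inner functionals, over `i ∈ S`. -/
def kerSet {ι : Type*} (a : ι → H) (S : Set ι) : Submodule ℝ H where
  carrier := {z | ∀ i ∈ S, ⟪a i, z⟫ = 0}
  add_mem' := by
    intro x y hx hy i hi
    rw [inner_add_right, hx i hi, hy i hi]; ring
  zero_mem' := by intro i hi; exact inner_zero_right _
  smul_mem' := by
    intro r x hx i hi
    rw [real_inner_smul_right, hx i hi]; ring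

@[simp] lemma mem_kerSet {ι : Type*} {a : ι → H} {S : Set ι} {z : H} :
    z ∈ kerSet a S ↔ ∀ i ∈ S, ⟪a i, z⟫ = 0 := Iff.rfl

lemma friedrichs_set_nonempty (U V : Submodule ℝ H) :
    {t | ∃ u ∈ U ⊓ (U ⊓ V)ᗮ, ∃ v ∈ V ⊓ (U ⊓ V)ᗮ,
      ‖u‖ ≤ 1 ∧ ‖v‖ ≤ 1 ∧ t = ⟪u, v⟫}.Nonempty := by
  refine ⟨0, 0, ?_, 0, ?_, by simp, by simp, by simp⟩ <;>
    exact Submodule.zero_mem _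

lemma friedrichs_set_bddAbove (U V : Submodule ℝ H) :
    BddAbove {t | ∃ u ∈ U ⊓ (U ⊓ V)ᗮ, ∃ v ∈ V ⊓ (U ⊓ V)ᗮ,
      ‖u‖ ≤ 1 ∧ ‖v‖ ≤ 1 ∧ t = ⟪u, v⟫} := by
  refine ⟨1, ?_⟩
  rintro t ⟨u, hu, v, hv, hu1, hv1, rfl⟩
  calc ⟪u, v⟫ ≤ ‖u‖ * ‖v‖ := real_inner_le_norm u v
  _ ≤ 1 * 1 := by
      apply mul_le_mul hu1 hv1 (norm_nonneg _) zero_le_one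
  _ = 1 := by ring

lemma le_friedrichs {U V : Submodule ℝ H} {u v : H}
    (hu : u ∈ U ⊓ (U ⊓ V)ᗮ) (hv : v ∈ V ⊓ (U ⊓ V)ᗮ)
    (hu1 : ‖u‖ ≤ 1) (hv1 : ‖v‖ ≤ 1) : ⟪u, v⟫ ≤ friedrichs U V :=
  le_csSup (friedrichs_set_bddAbove U V) ⟨u, hu, v, hv, hu1, hv1, rfl⟩

lemma friedrichs_nonneg (U V : Submodule ℝ H) : 0 ≤ friedrichs U V := by
  have := le_friedrichs (U := U) (V := V) (u := 0) (v := 0)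
    (Submodule.zero_mem _) (Submodule.zero_mem _) (by simp) (by simp)
  simpa using this

lemma friedrichs_comm (U V : Submodule ℝ H) : friedrichs U V = friedrichs V U := by
  unfold friedrichs
  congr 1
  ext t
  constructor
  · rintro ⟨u, hu, v, hv, hu1, hv1, rfl⟩
    exact ⟨v, by rwa [inf_comm V U], u, by rwa [inf_comm V U], hv1, hu1,
      (real_inner_comm v u)⟩
  · rintro ⟨u, hu, v, hv, hu1, hv1, rfl⟩
    exact ⟨v, by rwa [inf_comm U V], u, by rwa [inf_comm U V], hv1, hu1,
      (real_inner_comm v u)⟩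

end Aux

section Angle
variable {H : Type*} [NormedAddCommGroup H] [InnerProductSpace ℝ H]
  [FiniteDimensional ℝ H]

lemma angle_bound (U V : Submodule ℝ H) (p q : H) (hp : p ∈ U) (hq : q ∈ V) :
    ‖p - (Submodule.orthogonalProjection (U ⊓ V) p : H)‖ ^ 2 * (1 - friedrichs U V ^ 2)
      ≤ ‖p - q‖ ^ 2 := by
  set M : Submodule ℝ H := U ⊓ V with hM
  set c := friedrichs U V with hc
  have hcnn : 0 ≤ c := friedrichs_nonneg U V
  set x₀ : H := (Submodule.orthogonalProjection M p : H) with hx₀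
  set x₁ : H := p - x₀ with hx₁
  set z : H := (Submodule.orthogonalProjection V x₁ : H) with hz
  have hx₀M : x₀ ∈ M := (Submodule.orthogonalProjection M p).2
  have hx₁U : x₁ ∈ U := U.sub_mem hp (inf_le_left (a := U) (b := V) hx₀M)
  have hx₁perp : x₁ ∈ Mᗮ := Submodule.sub_starProjection_mem_orthogonal p
  have hzV : z ∈ V := (Submodule.orthogonalProjection V x₁).2
  have hzperp : z ∈ Mᗮ := by
    rw [Submodule.mem_orthogonal]
    intro m hm
    have h1 : ⟪(Submodule.orthogonalProjection V m : H), x₁⟫ = ⟪m, z⟫ :=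
      Submodule.inner_starProjection_left_eq_right V m x₁
    have h2 : (Submodule.orthogonalProjection V m : H) = m := by
      exact Submodule.starProjection_eq_self_iff.2 (inf_le_right (a := U) (b := V) hm)
    rw [← h1, h2]
    rw [real_inner_comm]
    exact (Submodule.mem_orthogonal' M x₁).1 hx₁perp m hm
  have hiz : ⟪x₁, z⟫ = ‖z‖ ^ 2 := by
    have h0 : ⟪x₁ - z, z⟫ = 0 := Submodule.starProjection_inner_eq_zero x₁ z hzV
    rw [inner_sub_left, sub_eq_zero] at h0
    rw [h0, real_inner_self_eq_norm_sq]
  have hz_le : ‖z‖ ≤ c * ‖x₁‖ := by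
    rcases eq_or_ne z 0 with h0 | h0
    · simp [h0]; positivity
    rcases eq_or_ne x₁ 0 with h1 | h1
    · exfalso; apply h0; rw [hz, h1]; simp
    have hu : (‖x₁‖⁻¹ • x₁) ∈ U ⊓ Mᗮ :=
      ⟨U.smul_mem _ hx₁U, Submodule.smul_mem _ _ hx₁perp⟩
    have hv : (‖z‖⁻¹ • z) ∈ V ⊓ Mᗮ :=
      ⟨V.smul_mem _ hzV, Submodule.smul_mem _ _ hzperp⟩
    have h2 : ⟪(‖x₁‖⁻¹ • x₁ : H), (‖z‖⁻¹ • z : H)⟫ ≤ c :=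
      le_friedrichs (by rwa [← hM]) (by rwa [← hM])
        (le_of_eq (norm_smul_inv_norm h1)) (le_of_eq (norm_smul_inv_norm h0))
    have h3 : ⟪(‖x₁‖⁻¹ • x₁ : H), (‖z‖⁻¹ • z : H)⟫ = ‖x₁‖⁻¹ * ‖z‖⁻¹ * ⟪x₁, z⟫ := by
      rw [real_inner_smul_left, real_inner_smul_right]; ring
    have hx1pos : (0:ℝ) < ‖x₁‖ := norm_pos_iff.2 h1
    have hzpos : (0:ℝ) < ‖z‖ := norm_pos_iff.2 h0
    rw [h3, hiz] at h2
    have h4 : ‖x₁‖⁻¹ * ‖z‖⁻¹ * ‖z‖ ^ 2 = ‖z‖ / ‖x₁‖ := by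
      field_simp
    rw [h4, div_le_iff₀ hx1pos] at h2
    linarith
  -- Pythagoras
  have hPVp : (Submodule.orthogonalProjection V p : H) = x₀ + z := by
    have : p = x₀ + x₁ := by rw [hx₁]; abel
    rw [this, map_add]
    push_cast
    congr 1
    exact Submodule.starProjection_eq_self_iff.2 (inf_le_right (a := U) (b := V) hx₀M)
  have hpyth : ‖p - (Submodule.orthogonalProjection V p : H)‖ ^ 2 ≤ ‖p - q‖ ^ 2 := by
    have horth : ⟪p - (Submodule.orthogonalProjection V p : H),
        (Submodule.orthogonalProjection V p : H) - q⟫ = 0 :=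
      Submodule.starProjection_inner_eq_zero p _ (V.sub_mem (Submodule.orthogonalProjection V p).2 hq)
    have hsum : p - q = (p - (Submodule.orthogonalProjection V p : H)) +
        ((Submodule.orthogonalProjection V p : H) - q) := by abel
    rw [hsum, norm_add_sq_real, horth]
    nlinarith [sq_nonneg ‖(Submodule.orthogonalProjection V p : H) - q‖]
  have hnorm : ‖p - (Submodule.orthogonalProjection V p : H)‖ ^ 2 = ‖x₁‖ ^ 2 - ‖z‖ ^ 2 := by
    have h5 : p - (Submodule.orthogonalProjection V p : H) = x₁ - z := by
      rw [hPVp, hx₁]; abel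
    rw [h5, norm_sub_sq_real, hiz]; ring
  have hz2 : ‖z‖ ^ 2 ≤ c ^ 2 * ‖x₁‖ ^ 2 := by nlinarith [norm_nonneg z, norm_nonneg x₁]
  calc ‖x₁‖ ^ 2 * (1 - c ^ 2) ≤ ‖x₁‖ ^ 2 - ‖z‖ ^ 2 := by nlinarith
  _ = ‖p - (Submodule.orthogonalProjection V p : H)‖ ^ 2 := hnorm.symm
  _ ≤ ‖p - q‖ ^ 2 := hpyth

end Angle
section Core
variable {H : Type*} [NormedAddCommGroup H] [InnerProductSpace ℝ H]
  [FiniteDimensional ℝ H]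

set_option maxHeartbeats 1000000 in
lemma core {ι ι' : Type*} [Fintype ι] [Fintype ι'] (a : ι → H) (b : ι' → H) :
    ∀ (k : ℕ) (p q : H) (s t : ℝ), 0 < s → 0 < t →
    (∀ i, ⟪a i, p⟫ ≤ 0) → (∀ j, ⟪b j, q⟫ ≤ 0) →
    ((Finset.univ.filter (fun i => ⟪a i, p⟫ < 0)).card
      + (Finset.univ.filter (fun j => ⟪b j, q⟫ < 0)).card ≤ k) →
    ‖p - q‖ ≤ t →
    s ≤ infDist p {z | (∀ i, ⟪a i, z⟫ ≤ 0) ∧ (∀ j, ⟪b j, z⟫ ≤ 0)} →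
    ∃ p' q', (∀ i, ⟪a i, p'⟫ ≤ 0) ∧ (∀ j, ⟪b j, q'⟫ ≤ 0) ∧
      1 - t ^ 2 / s ^ 2 ≤
        friedrichs (kerSet a {i | ⟪a i, p'⟫ = 0}) (kerSet b {j | ⟪b j, q'⟫ = 0}) ^ 2 := by
  classical
  intro k
  induction k using Nat.strong_induction_on with
  | _ k IH =>
  intro p q s t hs ht hpK hqK hcard hpq hinf
  set K : Set H := {z | (∀ i, ⟪a i, z⟫ ≤ 0) ∧ (∀ j, ⟪b j, z⟫ ≤ 0)} with hK
  set U : Submodule ℝ H := kerSet a {i | ⟪a i, p⟫ = 0} with hU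
  set V : Submodule ℝ H := kerSet b {j | ⟪b j, q⟫ = 0} with hV
  set c : ℝ := friedrichs U V with hc
  by_cases hdone : 1 - t ^ 2 / s ^ 2 ≤ c ^ 2
  · exact ⟨p, q, hpK, hqK, hdone⟩
  push_neg at hdone
  have hpU : p ∈ U := by intro i hi; exact hi
  have hqV : q ∈ V := by intro j hj; exact hj
  set M : Submodule ℝ H := U ⊓ V with hM
  set m₀ : H := (Submodule.orthogonalProjection M p : H) with hm₀
  set δ : ℝ := ‖p - m₀‖ with hδ
  have hδnn : 0 ≤ δ := norm_nonneg _
  have hangle : δ ^ 2 * (1 - c ^ 2) ≤ ‖p - q‖ ^ 2 := angle_bound U V p q hpU hqV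
  have hts : t ^ 2 / s ^ 2 < 1 - c ^ 2 := by linarith
  have h1c : 0 < 1 - c ^ 2 := lt_of_le_of_lt (by positivity) hts
  have ht2 : t ^ 2 < s ^ 2 * (1 - c ^ 2) := by
    rw [div_lt_iff₀ (by positivity)] at hts; linarith
  have hδs : δ < s := by
    have h2 : δ ^ 2 * (1 - c ^ 2) ≤ t ^ 2 := by
      refine le_trans hangle ?_
      have h3 : ‖p - q‖ ≤ t := hpq
      nlinarith [norm_nonneg (p - q)]
    have h7 : δ ^ 2 < s ^ 2 := (mul_lt_mul_iff_of_pos_right h1c).1 (lt_of_le_of_lt h2 ht2)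
    by_contra hcon
    push_neg at hcon
    nlinarith
  have hm₀M : m₀ ∈ M := (Submodule.orthogonalProjection M p).2
  have hm₀a : ∀ i, ⟪a i, p⟫ = 0 → ⟪a i, m₀⟫ = 0 := fun i hi =>
    (inf_le_left (a := U) (b := V) hm₀M) i hi
  have hm₀b : ∀ j, ⟪b j, q⟫ = 0 → ⟪b j, m₀⟫ = 0 := fun j hj =>
    (inf_le_right (a := U) (b := V) hm₀M) j hj
  set BA : Finset ι := Finset.univ.filter (fun i => 0 < ⟪a i, m₀⟫) with hBA
  set BB : Finset ι' := Finset.univ.filter (fun j => 0 < ⟪b j, m₀⟫) with hBB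
  set f : ι → ℝ := fun i => -⟪a i, p⟫ / (⟪a i, m₀⟫ - ⟪a i, p⟫) with hf
  set g : ι' → ℝ := fun j => -⟪b j, q⟫ / (⟪b j, m₀⟫ - ⟪b j, q⟫) with hg
  set T : Finset ℝ := BA.image f ∪ BB.image g with hT
  by_cases hTne : T.Nonempty
  swap
  · exfalso
    rw [Finset.not_nonempty_iff_eq_empty, Finset.union_eq_empty] at hTne
    have hBAe : BA = ∅ := Finset.image_eq_empty.1 hTne.1
    have hBBe : BB = ∅ := Finset.image_eq_empty.1 hTne.2
    have hm₀K : m₀ ∈ K := by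
      constructor
      · intro i
        by_contra hlt
        push_neg at hlt
        have hi : i ∈ BA := by
          rw [hBA, Finset.mem_filter]
          exact ⟨Finset.mem_univ i, hlt⟩
        rw [hBAe] at hi; exact absurd hi (Finset.notMem_empty i)
      · intro j
        by_contra hlt
        push_neg at hlt
        have hj : j ∈ BB := by
          rw [hBB, Finset.mem_filter]
          exact ⟨Finset.mem_univ j, hlt⟩
        rw [hBBe] at hj; exact absurd hj (Finset.notMem_empty j)
    have hle : infDist p K ≤ δ := by
      have h4 := infDist_le_dist_of_mem (x := p) hm₀K
      rwa [dist_eq_norm] at h4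
    linarith
  have hBAprop : ∀ i ∈ BA, ⟪a i, p⟫ < 0 ∧ 0 < ⟪a i, m₀⟫ := by
    intro i hi
    have h2 : 0 < ⟪a i, m₀⟫ := by
      rw [hBA, Finset.mem_filter] at hi; exact hi.2
    refine ⟨?_, h2⟩
    rcases lt_or_eq_of_le (hpK i) with h | h
    · exact h
    · exact absurd (hm₀a i h) (by linarith)
  have hBBprop : ∀ j ∈ BB, ⟪b j, q⟫ < 0 ∧ 0 < ⟪b j, m₀⟫ := by
    intro j hj
    have h2 : 0 < ⟪b j, m₀⟫ := by
      rw [hBB, Finset.mem_filter] at hj; exact hj.2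
    refine ⟨?_, h2⟩
    rcases lt_or_eq_of_le (hqK j) with h | h
    · exact h
    · exact absurd (hm₀b j h) (by linarith)
  have hTmem : ∀ θ' ∈ T, 0 < θ' ∧ θ' < 1 := by
    intro θ' hθ'
    rw [hT, Finset.mem_union] at hθ'
    rcases hθ' with h | h
    · rcases Finset.mem_image.1 h with ⟨i, hi, rfl⟩
      obtain ⟨h1, h2⟩ := hBAprop i hi
      rw [hf]
      constructor
      · exact div_pos (by linarith) (by linarith)
      · rw [div_lt_one (by linarith)]; linarith
    · rcases Finset.mem_image.1 h with ⟨j, hj, rfl⟩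
      obtain ⟨h1, h2⟩ := hBBprop j hj
      rw [hg]
      constructor
      · exact div_pos (by linarith) (by linarith)
      · rw [div_lt_one (by linarith)]; linarith
  set θ : ℝ := T.min' hTne with hθ
  have hθT : θ ∈ T := T.min'_mem hTne
  obtain ⟨hθpos, hθlt⟩ := hTmem θ hθT
  set p' : H := p + θ • (m₀ - p) with hp'
  set q' : H := q + θ • (m₀ - q) with hq'
  have hip' : ∀ i, ⟪a i, p'⟫ = (1 - θ) * ⟪a i, p⟫ + θ * ⟪a i, m₀⟫ := by
    intro i
    rw [hp', inner_add_right, real_inner_smul_right, inner_sub_right]; ring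
  have hjq' : ∀ j, ⟪b j, q'⟫ = (1 - θ) * ⟪b j, q⟫ + θ * ⟪b j, m₀⟫ := by
    intro j
    rw [hq', inner_add_right, real_inner_smul_right, inner_sub_right]; ring
  have hp'K : ∀ i, ⟪a i, p'⟫ ≤ 0 := by
    intro i
    rw [hip' i]
    by_cases hbad : 0 < ⟪a i, m₀⟫
    · have hiBA : i ∈ BA := by rw [hBA, Finset.mem_filter]; exact ⟨Finset.mem_univ i, hbad⟩
      have hθle : θ ≤ f i :=
        T.min'_le _ (Finset.mem_union_left _ (Finset.mem_image_of_mem f hiBA))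
      obtain ⟨h1, h2⟩ := hBAprop i hiBA
      rw [hf] at hθle
      have hd : 0 < ⟪a i, m₀⟫ - ⟪a i, p⟫ := by linarith
      rw [le_div_iff₀ hd] at hθle
      linarith [hθle]
    · push_neg at hbad
      have hA : (1 - θ) * ⟪a i, p⟫ ≤ 0 :=
        mul_nonpos_of_nonneg_of_nonpos (by linarith) (hpK i)
      have hB : θ * ⟪a i, m₀⟫ ≤ 0 :=
        mul_nonpos_of_nonneg_of_nonpos hθpos.le hbad
      linarith
  have hq'K : ∀ j, ⟪b j, q'⟫ ≤ 0 := by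
    intro j
    rw [hjq' j]
    by_cases hbad : 0 < ⟪b j, m₀⟫
    · have hjBB : j ∈ BB := by rw [hBB, Finset.mem_filter]; exact ⟨Finset.mem_univ j, hbad⟩
      have hθle : θ ≤ g j :=
        T.min'_le _ (Finset.mem_union_right _ (Finset.mem_image_of_mem g hjBB))
      obtain ⟨h1, h2⟩ := hBBprop j hjBB
      rw [hg] at hθle
      have hd : 0 < ⟪b j, m₀⟫ - ⟪b j, q⟫ := by linarith
      rw [le_div_iff₀ hd] at hθle
      linarith [hθle]
    · push_neg at hbad
      have hA : (1 - θ) * ⟪b j, q⟫ ≤ 0 :=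
        mul_nonpos_of_nonneg_of_nonpos (by linarith) (hqK j)
      have hB : θ * ⟪b j, m₀⟫ ≤ 0 :=
        mul_nonpos_of_nonneg_of_nonpos hθpos.le hbad
      linarith
  -- active sets only grow
  have hsubA : (Finset.univ.filter (fun i => ⟪a i, p'⟫ < 0))
      ⊆ (Finset.univ.filter (fun i => ⟪a i, p⟫ < 0)) := by
    intro i hi
    rw [Finset.mem_filter] at hi ⊢
    refine ⟨Finset.mem_univ i, ?_⟩
    rcases lt_or_eq_of_le (hpK i) with h | h
    · exact h
    · exfalso
      have h3 := hm₀a i h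
      have h4 : ⟪a i, p'⟫ = 0 := by rw [hip' i, h, h3]; ring
      rw [h4] at hi
      exact absurd hi.2 (lt_irrefl 0)
  have hsubB : (Finset.univ.filter (fun j => ⟪b j, q'⟫ < 0))
      ⊆ (Finset.univ.filter (fun j => ⟪b j, q⟫ < 0)) := by
    intro j hj
    rw [Finset.mem_filter] at hj ⊢
    refine ⟨Finset.mem_univ j, ?_⟩
    rcases lt_or_eq_of_le (hqK j) with h | h
    · exact h
    · exfalso
      have h3 := hm₀b j h
      have h4 : ⟪b j, q'⟫ = 0 := by rw [hjq' j, h, h3]; ring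
      rw [h4] at hj
      exact absurd hj.2 (lt_irrefl 0)
  -- strict decrease
  have hstrict : (Finset.univ.filter (fun i => ⟪a i, p'⟫ < 0)).card
      + (Finset.univ.filter (fun j => ⟪b j, q'⟫ < 0)).card < k := by
    rw [hT, Finset.mem_union] at hθT
    have hcardA := Finset.card_le_card hsubA
    have hcardB := Finset.card_le_card hsubB
    rcases hθT with h | h
    · rcases Finset.mem_image.1 h with ⟨i, hi, hfi⟩
      obtain ⟨h1, h2⟩ := hBAprop i hi
      have hd : (0:ℝ) < ⟪a i, m₀⟫ - ⟪a i, p⟫ := by linarith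
      have hzero : ⟪a i, p'⟫ = 0 := by
        rw [hip' i, ← hfi, hf]
        field_simp
        ring
      have hsA : (Finset.univ.filter (fun i => ⟪a i, p'⟫ < 0))
          ⊂ (Finset.univ.filter (fun i => ⟪a i, p⟫ < 0)) := by
        refine ⟨hsubA, fun hcon => ?_⟩
        have hmemi : i ∈ Finset.univ.filter (fun i => ⟪a i, p⟫ < 0) := by
          rw [Finset.mem_filter]; exact ⟨Finset.mem_univ i, h1⟩
        have := hcon hmemi
        rw [Finset.mem_filter] at this
        rw [hzero] at this
        exact absurd this.2 (lt_irrefl 0)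
      have := Finset.card_lt_card hsA
      omega
    · rcases Finset.mem_image.1 h with ⟨j, hj, hgj⟩
      obtain ⟨h1, h2⟩ := hBBprop j hj
      have hd : (0:ℝ) < ⟪b j, m₀⟫ - ⟪b j, q⟫ := by linarith
      have hzero : ⟪b j, q'⟫ = 0 := by
        rw [hjq' j, ← hgj, hg]
        field_simp
        ring
      have hsB : (Finset.univ.filter (fun j => ⟪b j, q'⟫ < 0))
          ⊂ (Finset.univ.filter (fun j => ⟪b j, q⟫ < 0)) := by
        refine ⟨hsubB, fun hcon => ?_⟩
        have hmemj : j ∈ Finset.univ.filter (fun j => ⟪b j, q⟫ < 0) := by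
          rw [Finset.mem_filter]; exact ⟨Finset.mem_univ j, h1⟩
        have := hcon hmemj
        rw [Finset.mem_filter] at this
        rw [hzero] at this
        exact absurd this.2 (lt_irrefl 0)
      have := Finset.card_lt_card hsB
      omega
  -- new data
  set s' : ℝ := s - θ * δ with hs'def
  set t' : ℝ := (1 - θ) * t with ht'def
  have hθδ : θ * δ ≤ δ := by nlinarith
  have hs' : 0 < s' := by rw [hs'def]; nlinarith
  have ht' : 0 < t' := by rw [ht'def]; nlinarith
  have hpq'eq : p' - q' = (1 - θ) • (p - q) := by
    rw [hp', hq']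
    module
  have hpq' : ‖p' - q'‖ ≤ t' := by
    rw [hpq'eq, norm_smul, Real.norm_eq_abs,
      abs_of_nonneg (show (0:ℝ) ≤ 1 - θ by linarith)]
    have h8 : (1 - θ) * ‖p - q‖ ≤ (1 - θ) * t :=
      mul_le_mul_of_nonneg_left hpq (by linarith)
    linarith [h8]
  have hdistpp' : dist p p' = θ * δ := by
    rw [dist_eq_norm]
    have h5 : p - p' = θ • (p - m₀) := by
      rw [hp']; module
    rw [h5, norm_smul, Real.norm_eq_abs, abs_of_nonneg hθpos.le, hδ]
  have hinf' : s' ≤ infDist p' K := by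
    have h6 : infDist p K ≤ infDist p' K + dist p p' := infDist_le_infDist_add_dist
    rw [hdistpp'] at h6
    rw [hs'def]
    linarith
  obtain ⟨p₂, q₂, hA2, hB2, hF2⟩ :=
    IH _ hstrict p' q' s' t' hs' ht' hp'K hq'K le_rfl hpq' hinf'
  refine ⟨p₂, q₂, hA2, hB2, le_trans ?_ hF2⟩
  have hcross : t' * s ≤ t * s' := by
    rw [ht'def, hs'def]
    nlinarith [mul_nonneg (mul_nonneg hθpos.le ht.le) (sub_nonneg.2 hδs.le)]
  have hratio : t' ^ 2 / s' ^ 2 ≤ t ^ 2 / s ^ 2 := by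
    rw [div_le_div_iff₀ (by positivity) (by positivity)]
    have h9 : (t' * s) ^ 2 ≤ (t * s') ^ 2 :=
      pow_le_pow_left₀ (mul_nonneg ht'.le hs.le) hcross 2
    calc t' ^ 2 * s ^ 2 = (t' * s) ^ 2 := by ring
    _ ≤ (t * s') ^ 2 := h9
    _ = t ^ 2 * s' ^ 2 := by ring
  linarith

end Core
section Basics
variable {H : Type*} [NormedAddCommGroup H] [InnerProductSpace ℝ H]

lemma poly_closed {n : ℕ} (a : Fin n → H) (b : Fin n → ℝ) :
    IsClosed {x : H | ∀ i, ⟪a i, x⟫ ≤ b i} := by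
  have h : {x : H | ∀ i, ⟪a i, x⟫ ≤ b i} = ⋂ i, {x : H | ⟪a i, x⟫ ≤ b i} := by
    ext x; simp [Set.mem_iInter]
  rw [h]
  exact isClosed_iInter fun i =>
    isClosed_le (Continuous.inner continuous_const continuous_id) continuous_const

lemma poly_convex {n : ℕ} (a : Fin n → H) (b : Fin n → ℝ) :
    Convex ℝ {x : H | ∀ i, ⟪a i, x⟫ ≤ b i} := by
  intro x hx y hy α β hα hβ hαβ i
  have h1 : ⟪a i, α • x + β • y⟫ = α * ⟪a i, x⟫ + β * ⟪a i, y⟫ := by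
    rw [inner_add_right, real_inner_smul_right, real_inner_smul_right]
  rw [h1]
  calc α * ⟪a i, x⟫ + β * ⟪a i, y⟫ ≤ α * b i + β * b i := by
        apply add_le_add (mul_le_mul_of_nonneg_left (hx i) hα)
          (mul_le_mul_of_nonneg_left (hy i) hβ)
  _ = b i := by rw [← add_mul, hαβ, one_mul]

lemma le_infDist' {s : Set H} (hne : s.Nonempty) {x : H} {r : ℝ}
    (h : ∀ y ∈ s, r ≤ dist x y) : r ≤ infDist x s := by
  rw [infDist_eq_iInf]
  haveI := hne.to_subtype
  exact le_ciInf fun y => h y y.2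

lemma min_norm_unique {C : Set H} (hC : Convex ℝ C) {v z : H} (hv : v ∈ C) (hz : z ∈ C)
    (hvmin : ∀ w ∈ C, ‖v‖ ≤ ‖w‖) (hzn : ‖z‖ = ‖v‖) : z = v := by
  have hm : (1/2 : ℝ) • z + (1/2 : ℝ) • v ∈ C :=
    hC hz hv (by norm_num) (by norm_num) (by norm_num)
  have h1 : ‖v‖ ≤ ‖(1/2 : ℝ) • z + (1/2 : ℝ) • v‖ := hvmin _ hm
  have h2 : (1/2 : ℝ) • z + (1/2 : ℝ) • v = (1/2 : ℝ) • (z + v) := by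
    rw [smul_add]
  rw [h2, norm_smul] at h1
  have h3 : ‖z + v‖ ^ 2 = ‖z‖ ^ 2 + 2 * ⟪z, v⟫ + ‖v‖ ^ 2 := norm_add_sq_real z v
  have h4 : ‖z - v‖ ^ 2 = ‖z‖ ^ 2 - 2 * ⟪z, v⟫ + ‖v‖ ^ 2 := norm_sub_sq_real z v
  have h5 : ‖z - v‖ ^ 2 ≤ 0 := by
    have h6 : (2:ℝ) * ‖v‖ ≤ ‖z + v‖ := by
      rw [Real.norm_eq_abs] at h1
      rw [abs_of_pos (by norm_num : (0:ℝ) < 1/2)] at h1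
      linarith
    have h7 : (2 * ‖v‖) ^ 2 ≤ ‖z + v‖ ^ 2 := by
      apply pow_le_pow_left₀ (by positivity) h6
    nlinarith [norm_nonneg v, norm_nonneg (z+v)]
  have h8 : ‖z - v‖ = 0 := by nlinarith [norm_nonneg (z - v)]
  exact sub_eq_zero.1 (norm_eq_zero.1 h8)

/-- characterization of nearest point projection on a convex set -/
lemma proj_char {C : Set H} (hC : Convex ℝ C) {p e : H} (he : e ∈ C)
    (hmin : ∀ z ∈ C, dist p e ≤ dist p z) : ∀ z ∈ C, ⟪p - e, z - e⟫ ≤ 0 := by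
  haveI : Nonempty C := ⟨⟨e, he⟩⟩
  have hinf : ‖p - e‖ = ⨅ w : C, ‖p - w‖ := by
    apply le_antisymm
    · apply le_ciInf
      intro w
      have := hmin w w.2
      rwa [dist_eq_norm, dist_eq_norm] at this
    · exact ciInf_le ⟨0, by rintro r ⟨w, rfl⟩; positivity⟩ (⟨e, he⟩ : C)
  exact (norm_eq_iInf_iff_real_inner_le_zero hC he).1 hinf

end Basics
section FaceRecon
variable {H : Type*} [NormedAddCommGroup H] [InnerProductSpace ℝ H]

lemma eps_mem {n : ℕ} (a : Fin n → H) (b : Fin n → ℝ) (e : H)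
    (he : ∀ i, ⟪a i, e⟫ ≤ b i) (u : H)
    (hu : ∀ i, ⟪a i, e⟫ = b i → ⟪a i, u⟫ ≤ 0) :
    ∃ ε > 0, ∀ ε' : ℝ, 0 ≤ ε' → ε' ≤ ε → ∀ i, ⟪a i, e + ε' • u⟫ ≤ b i := by
  classical
  set T : Finset (Fin n) := Finset.univ.filter (fun i => ⟪a i, e⟫ < b i) with hT
  set G : Finset ℝ :=
    insert 1 (T.image fun i => (b i - ⟪a i, e⟫) / (|⟪a i, u⟫| + 1)) with hG
  have hGne : G.Nonempty := ⟨1, Finset.mem_insert_self _ _⟩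
  set ε := G.min' hGne with hε
  have hεpos : 0 < ε := by
    rw [hε, Finset.lt_min'_iff]
    intro y hy
    rw [hG, Finset.mem_insert] at hy
    rcases hy with rfl | hy
    · norm_num
    · rcases Finset.mem_image.1 hy with ⟨i, hi, rfl⟩
      rw [hT, Finset.mem_filter] at hi
      have h2 := hi.2
      have h3 : (0:ℝ) < |⟪a i, u⟫| + 1 := by positivity
      exact div_pos (by linarith) h3
  refine ⟨ε, hεpos, ?_⟩
  intro ε' h0 hε' i
  rw [inner_add_right, real_inner_smul_right]
  by_cases hact : ⟪a i, e⟫ = b i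
  · have h4 := hu i hact
    have h5 : ε' * ⟪a i, u⟫ ≤ 0 := mul_nonpos_of_nonneg_of_nonpos h0 h4
    linarith
  · have hlt : ⟪a i, e⟫ < b i := lt_of_le_of_ne (he i) hact
    have hiT : i ∈ T := by rw [hT, Finset.mem_filter]; exact ⟨Finset.mem_univ _, hlt⟩
    have hεle : ε ≤ (b i - ⟪a i, e⟫) / (|⟪a i, u⟫| + 1) :=
      Finset.min'_le _ _ (Finset.mem_insert_of_mem (Finset.mem_image_of_mem _ hiT))
    have h3 : (0:ℝ) < |⟪a i, u⟫| + 1 := by positivity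
    have h2 : ε * (|⟪a i, u⟫| + 1) ≤ b i - ⟪a i, e⟫ := by
      rw [le_div_iff₀ h3] at hεle; exact hεle
    have habs : ⟪a i, u⟫ ≤ |⟪a i, u⟫| := le_abs_self _
    have e1 : ε' * ⟪a i, u⟫ ≤ ε' * |⟪a i, u⟫| := mul_le_mul_of_nonneg_left habs h0
    have e2 : ε' * |⟪a i, u⟫| ≤ ε * |⟪a i, u⟫| :=
      mul_le_mul_of_nonneg_right hε' (abs_nonneg _)
    have e3 : ε * |⟪a i, u⟫| ≤ ε * (|⟪a i, u⟫| + 1) :=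
      mul_le_mul_of_nonneg_left (by linarith) hεpos.le
    linarith

lemma faceRecon {n : ℕ} (a : Fin n → H) (b : Fin n → ℝ) (P : Set H)
    (hP : P = {z : H | ∀ i, ⟪a i, z⟫ ≤ b i}) (e : H) (he : e ∈ P) (ph : H)
    (hph : ∀ i, ⟪a i, e⟫ = b i → ⟪a i, ph⟫ ≤ 0) :
    ∃ x : H, (face P x).Nonempty ∧
      aff0 (face P x) = kerSet a {i | ⟪a i, e⟫ = b i ∧ ⟪a i, ph⟫ = 0} := by
  classical
  have heP : ∀ i, ⟪a i, e⟫ ≤ b i := by rw [hP] at he; exact he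
  set S : Finset (Fin n) :=
    Finset.univ.filter (fun i => ⟪a i, e⟫ = b i ∧ ⟪a i, ph⟫ = 0) with hS
  have hSmem : ∀ i, i ∈ S ↔ (⟪a i, e⟫ = b i ∧ ⟪a i, ph⟫ = 0) := by
    intro i; rw [hS, Finset.mem_filter]; simp
  set x : H := ∑ i ∈ S, a i with hx
  have hxsum : ∀ z : H, ⟪x, z⟫ = ∑ i ∈ S, ⟪a i, z⟫ := fun z => sum_inner S a z
  have hmax : ∀ z ∈ P, ⟪x, z⟫ ≤ ⟪x, e⟫ := by
    intro z hz
    rw [hxsum z, hxsum e]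
    apply Finset.sum_le_sum
    intro i hi
    have h1 := ((hSmem i).1 hi).1
    rw [h1]
    rw [hP] at hz; exact hz i
  have heF : e ∈ face P x := ⟨he, fun z hz => hmax z hz⟩
  have hxe : ⟪x, e⟫ = ∑ i ∈ S, b i := by
    rw [hxsum e]
    exact Finset.sum_congr rfl fun i hi => ((hSmem i).1 hi).1
  have hfaceEq : face P x = {z : H | z ∈ P ∧ ∀ i ∈ S, ⟪a i, z⟫ = b i} := by
    ext z
    constructor
    · rintro ⟨hzP, hzmax⟩
      refine ⟨hzP, ?_⟩
      have h1 : ⟪x, e⟫ ≤ ⟪x, z⟫ := hzmax e he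
      have h2 : ⟪x, z⟫ ≤ ⟪x, e⟫ := hmax z hzP
      have hle : ∀ i ∈ S, ⟪a i, z⟫ ≤ b i := by
        intro i _
        rw [hP] at hzP; exact hzP i
      have h6 : ∑ i ∈ S, ⟪a i, z⟫ = ∑ i ∈ S, b i := by
        rw [← hxsum z, le_antisymm h2 h1, hxe]
      exact (Finset.sum_eq_sum_iff_of_le hle).1 h6
    · rintro ⟨hzP, hzeq⟩
      refine ⟨hzP, ?_⟩
      intro w hw
      rw [hxsum w, hxsum z]
      calc ∑ i ∈ S, ⟪a i, w⟫ ≤ ∑ i ∈ S, b i := by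
            apply Finset.sum_le_sum
            intro i _
            rw [hP] at hw; exact hw i
      _ = ∑ i ∈ S, ⟪a i, z⟫ := (Finset.sum_congr rfl fun i hi => (hzeq i hi).symm)
  have haff : aff0 (face P x) = vectorSpan ℝ (face P x) := direction_affineSpan ℝ _
  refine ⟨x, ⟨e, heF⟩, ?_⟩
  rw [haff]
  apply le_antisymm
  · rw [vectorSpan_def, Submodule.span_le]
    intro w hw
    rcases Set.mem_vsub.1 hw with ⟨z₁, hz₁, z₂, hz₂, rfl⟩
    rw [hfaceEq] at hz₁ hz₂
    intro i hi
    have hiS : i ∈ S := (hSmem i).2 hi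
    have e1 := hz₁.2 i hiS
    have e2 := hz₂.2 i hiS
    rw [vsub_eq_sub, inner_sub_right, e1, e2, sub_self]
  · intro d hd
    have hdker : ∀ i, ⟪a i, e⟫ = b i → ⟪a i, ph⟫ = 0 → ⟪a i, d⟫ = 0 := by
      intro i h1 h2; exact hd i ⟨h1, h2⟩
    -- choose η
    set T₁ : Finset (Fin n) :=
      Finset.univ.filter (fun i => ⟪a i, e⟫ = b i ∧ ⟪a i, ph⟫ < 0) with hT₁
    set G₁ : Finset ℝ :=
      insert 1 (T₁.image fun i => (-⟪a i, ph⟫) / (|⟪a i, d⟫| + 1)) with hG₁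
    have hG₁ne : G₁.Nonempty := ⟨1, Finset.mem_insert_self _ _⟩
    set η := G₁.min' hG₁ne with hη
    have hηpos : 0 < η := by
      rw [hη, Finset.lt_min'_iff]
      intro y hy
      rw [hG₁, Finset.mem_insert] at hy
      rcases hy with rfl | hy
      · norm_num
      · rcases Finset.mem_image.1 hy with ⟨i, hi, rfl⟩
        rw [hT₁, Finset.mem_filter] at hi
        have h2 := hi.2.2
        have h3 : (0:ℝ) < |⟪a i, d⟫| + 1 := by positivity
        exact div_pos (by linarith) h3
    set u₂ : H := ph + η • d with hu₂def
    have hu₂ : ∀ i, ⟪a i, e⟫ = b i → ⟪a i, u₂⟫ ≤ 0 := by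
      intro i hact
      rw [hu₂def, inner_add_right, real_inner_smul_right]
      by_cases hz0 : ⟪a i, ph⟫ = 0
      · rw [hz0, hdker i hact hz0]; simp
      · have hneg : ⟪a i, ph⟫ < 0 := lt_of_le_of_ne (hph i hact) hz0
        have hiT : i ∈ T₁ := by
          rw [hT₁, Finset.mem_filter]; exact ⟨Finset.mem_univ _, hact, hneg⟩
        have hηle : η ≤ (-⟪a i, ph⟫) / (|⟪a i, d⟫| + 1) :=
          Finset.min'_le _ _ (Finset.mem_insert_of_mem (Finset.mem_image_of_mem _ hiT))
        have h3 : (0:ℝ) < |⟪a i, d⟫| + 1 := by positivity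
        have h2 : η * (|⟪a i, d⟫| + 1) ≤ -⟪a i, ph⟫ := by
          rw [le_div_iff₀ h3] at hηle; exact hηle
        have habs : ⟪a i, d⟫ ≤ |⟪a i, d⟫| := le_abs_self _
        have e1 : η * ⟪a i, d⟫ ≤ η * |⟪a i, d⟫| := mul_le_mul_of_nonneg_left habs hηpos.le
        have e3 : η * |⟪a i, d⟫| ≤ η * (|⟪a i, d⟫| + 1) :=
          mul_le_mul_of_nonneg_left (by linarith) hηpos.le
        linarith
    have hu₂S : ∀ i ∈ S, ⟪a i, u₂⟫ = 0 := by
      intro i hi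
      obtain ⟨h1, h2⟩ := (hSmem i).1 hi
      rw [hu₂def, inner_add_right, real_inner_smul_right, h2, hdker i h1 h2]
      ring
    obtain ⟨ε₁, hε₁pos, hε₁⟩ := eps_mem a b e heP ph hph
    obtain ⟨ε₂, hε₂pos, hε₂⟩ := eps_mem a b e heP u₂ hu₂
    set ε := min ε₁ ε₂ with hεdef
    have hεpos : 0 < ε := lt_min hε₁pos hε₂pos
    set z₁ : H := e + ε • ph with hz₁def
    set z₂ : H := e + ε • u₂ with hz₂def
    have hz₁P : z₁ ∈ P := by
      rw [hP]
      exact fun i => hε₁ ε hεpos.le (min_le_left _ _) i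
    have hz₂P : z₂ ∈ P := by
      rw [hP]
      exact fun i => hε₂ ε hεpos.le (min_le_right _ _) i
    have hz₁F : z₁ ∈ face P x := by
      rw [hfaceEq]
      refine ⟨hz₁P, ?_⟩
      intro i hi
      obtain ⟨h1, h2⟩ := (hSmem i).1 hi
      rw [hz₁def, inner_add_right, real_inner_smul_right, h1, h2]
      ring
    have hz₂F : z₂ ∈ face P x := by
      rw [hfaceEq]
      refine ⟨hz₂P, ?_⟩
      intro i hi
      obtain ⟨h1, _⟩ := (hSmem i).1 hi
      rw [hz₂def, inner_add_right, real_inner_smul_right, h1, hu₂S i hi]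
      ring
    have hdiff : z₂ -ᵥ z₁ = (ε * η) • d := by
      rw [vsub_eq_sub, hz₂def, hz₁def, hu₂def]
      module
    have hne : (ε * η) ≠ 0 := by positivity
    have hmem := vsub_mem_vectorSpan ℝ hz₂F hz₁F
    have hd2 : d = (ε * η)⁻¹ • (z₂ -ᵥ z₁) := by
      rw [hdiff, smul_smul, inv_mul_cancel₀ hne, one_smul]
    rw [hd2]
    exact Submodule.smul_mem _ _ hmem

end FaceRecon


section Reduction
variable {H : Type*} [NormedAddCommGroup H] [InnerProductSpace ℝ H]
  [FiniteDimensional ℝ H] [ProperSpace H]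

set_option maxHeartbeats 1000000 in
lemma reduction {n m : ℕ} (a : Fin n → H) (b : Fin n → ℝ) (c : Fin m → H) (d : Fin m → ℝ)
    {P R : Set H} (hP : P = {z : H | ∀ i, ⟪a i, z⟫ ≤ b i})
    (hR : R = {z : H | ∀ j, ⟪c j, z⟫ ≤ d j})
    {p₀ : H} (hp₀P : p₀ ∈ P) (hp₀E : p₀ ∉ P ∩ R) (hne : (P ∩ R).Nonempty) :
    ∃ e ph qh : H, e ∈ P ∩ R ∧
      (∀ i, ⟪a i, e⟫ = b i → ⟪a i, ph⟫ ≤ 0) ∧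
      (∀ j, ⟪c j, e⟫ = d j → ⟪c j, qh⟫ ≤ 0) ∧
      1 - (infDist p₀ R) ^ 2 / (infDist p₀ (P ∩ R)) ^ 2 ≤
        friedrichs (kerSet a {i | ⟪a i, e⟫ = b i ∧ ⟪a i, ph⟫ = 0})
          (kerSet c {j | ⟪c j, e⟫ = d j ∧ ⟪c j, qh⟫ = 0}) ^ 2 := by
  classical
  have hPcl : IsClosed P := hP ▸ poly_closed a b
  have hRcl : IsClosed R := hR ▸ poly_closed c d
  have hPconv : Convex ℝ P := hP ▸ poly_convex a b
  have hRconv : Convex ℝ R := hR ▸ poly_convex c d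
  have hEcl : IsClosed (P ∩ R) := hPcl.inter hRcl
  have hEconv : Convex ℝ (P ∩ R) := hPconv.inter hRconv
  have hRne : R.Nonempty := hne.mono Set.inter_subset_right
  set s : ℝ := infDist p₀ (P ∩ R) with hs_def
  set t : ℝ := infDist p₀ R with ht_def
  have hs : 0 < s := by
    rcases lt_or_eq_of_le (infDist_nonneg (s := P ∩ R) (x := p₀)) with h | h
    · exact h
    · exact absurd ((hEcl.mem_iff_infDist_zero hne).2 h.symm) hp₀E
  have ht : 0 < t := by
    rcases lt_or_eq_of_le (infDist_nonneg (s := R) (x := p₀)) with h | h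
    · exact h
    · exact absurd ⟨hp₀P, (hRcl.mem_iff_infDist_zero hRne).2 h.symm⟩ hp₀E
  obtain ⟨e, heE, hedist⟩ := hEcl.exists_infDist_eq_dist hne p₀
  have hproj : ∀ z ∈ P ∩ R, ⟪p₀ - e, z - e⟫ ≤ 0 := by
    apply proj_char hEconv heE
    intro z hz
    rw [← hedist]
    exact infDist_le_dist_of_mem hz
  have heP : ∀ i, ⟪a i, e⟫ ≤ b i := by
    have := heE.1; rw [hP] at this; exact this
  have heR : ∀ j, ⟪c j, e⟫ ≤ d j := by
    have := heE.2; rw [hR] at this; exact this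
  -- local radius ρ
  set SP : Finset (Fin n) := Finset.univ.filter (fun i => ⟪a i, e⟫ < b i) with hSP
  set SQ : Finset (Fin m) := Finset.univ.filter (fun j => ⟪c j, e⟫ < d j) with hSQ
  set Gρ : Finset ℝ := insert 1
    ((SP.image fun i => (b i - ⟪a i, e⟫) / (‖a i‖ + 1))
      ∪ (SQ.image fun j => (d j - ⟪c j, e⟫) / (‖c j‖ + 1))) with hGρ
  have hGρne : Gρ.Nonempty := ⟨1, Finset.mem_insert_self _ _⟩
  set ρ := Gρ.min' hGρne with hρdef
  have hρpos : 0 < ρ := by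
    rw [hρdef, Finset.lt_min'_iff]
    intro y hy
    rw [hGρ, Finset.mem_insert] at hy
    rcases hy with rfl | hy
    · norm_num
    · rw [Finset.mem_union] at hy
      rcases hy with hy | hy
      · rcases Finset.mem_image.1 hy with ⟨i, hi, rfl⟩
        rw [hSP, Finset.mem_filter] at hi
        exact div_pos (by linarith [hi.2]) (by positivity)
      · rcases Finset.mem_image.1 hy with ⟨j, hj, rfl⟩
        rw [hSQ, Finset.mem_filter] at hj
        exact div_pos (by linarith [hj.2]) (by positivity)
  have hρ : ∀ z : H, ‖z‖ ≤ ρ → (∀ i, ⟪a i, e⟫ = b i → ⟪a i, z⟫ ≤ 0) →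
      (∀ j, ⟪c j, e⟫ = d j → ⟪c j, z⟫ ≤ 0) → (e + z) ∈ P ∩ R := by
    intro z hz hza hzc
    constructor
    · rw [hP]
      intro i
      rw [inner_add_right]
      by_cases hact : ⟪a i, e⟫ = b i
      · linarith [hza i hact]
      · have hlt : ⟪a i, e⟫ < b i := lt_of_le_of_ne (heP i) hact
        have hiS : i ∈ SP := by rw [hSP, Finset.mem_filter]; exact ⟨Finset.mem_univ _, hlt⟩
        have hle : ρ ≤ (b i - ⟪a i, e⟫) / (‖a i‖ + 1) :=
          Finset.min'_le _ _ (Finset.mem_insert_of_mem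
            (Finset.mem_union_left _ (Finset.mem_image_of_mem _ hiS)))
        have h3 : (0:ℝ) < ‖a i‖ + 1 := by positivity
        rw [le_div_iff₀ h3] at hle
        have h4 : ⟪a i, z⟫ ≤ ‖a i‖ * ‖z‖ := real_inner_le_norm _ _
        have h5 : ‖a i‖ * ‖z‖ ≤ ‖a i‖ * ρ := mul_le_mul_of_nonneg_left hz (norm_nonneg _)
        nlinarith [norm_nonneg (a i), hρpos.le]
    · rw [hR]
      intro j
      rw [inner_add_right]
      by_cases hact : ⟪c j, e⟫ = d j
      · linarith [hzc j hact]
      · have hlt : ⟪c j, e⟫ < d j := lt_of_le_of_ne (heR j) hact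
        have hjS : j ∈ SQ := by rw [hSQ, Finset.mem_filter]; exact ⟨Finset.mem_univ _, hlt⟩
        have hle : ρ ≤ (d j - ⟪c j, e⟫) / (‖c j‖ + 1) :=
          Finset.min'_le _ _ (Finset.mem_insert_of_mem
            (Finset.mem_union_right _ (Finset.mem_image_of_mem _ hjS)))
        have h3 : (0:ℝ) < ‖c j‖ + 1 := by positivity
        rw [le_div_iff₀ h3] at hle
        have h4 : ⟪c j, z⟫ ≤ ‖c j‖ * ‖z‖ := real_inner_le_norm _ _
        have h5 : ‖c j‖ * ‖z‖ ≤ ‖c j‖ * ρ := mul_le_mul_of_nonneg_left hz (norm_nonneg _)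
        nlinarith [norm_nonneg (c j), hρpos.le]
  -- scaling
  set lam : ℝ := min (1/2) (ρ / (4 * (s + 1))) with hlam_def
  have hlampos : 0 < lam := by
    apply lt_min (by norm_num)
    positivity
  have hlamle : lam ≤ 1/2 := min_le_left _ _
  have h2lam : 2 * lam * s < ρ := by
    have h1 : lam ≤ ρ / (4 * (s + 1)) := min_le_right _ _
    have h2 : (0:ℝ) < 4 * (s + 1) := by positivity
    rw [le_div_iff₀ h2] at h1
    nlinarith
  set w : H := lam • (p₀ - e) with hw_def
  have hp₀e : ‖p₀ - e‖ = s := by rw [← dist_eq_norm, ← hedist]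
  have hwnorm : ‖w‖ = lam * s := by
    rw [hw_def, norm_smul, Real.norm_eq_abs, abs_of_pos hlampos, hp₀e]
  -- index types of active constraints
  set ι := {i : Fin n // ⟪a i, e⟫ = b i} with hι
  set ι' := {j : Fin m // ⟪c j, e⟫ = d j} with hι'
  haveI : Fintype ι := Fintype.ofFinite _
  haveI : Fintype ι' := Fintype.ofFinite _
  set A : ι → H := fun i => a i.1 with hA
  set C : ι' → H := fun j => c j.1 with hC
  have hwKP : ∀ i : ι, ⟪A i, w⟫ ≤ 0 := by
    intro i
    rw [hA, hw_def, real_inner_smul_right, inner_sub_right]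
    have h1 : ⟪a i.1, p₀⟫ ≤ b i.1 := by rw [hP] at hp₀P; exact hp₀P i.1
    have h2 : ⟪a i.1, e⟫ = b i.1 := i.2
    have : ⟪a i.1, p₀⟫ - ⟪a i.1, e⟫ ≤ 0 := by rw [h2]; linarith
    exact mul_nonpos_of_nonneg_of_nonpos hlampos.le this
  obtain ⟨qR, hqRR, hqRdist⟩ := hRcl.exists_infDist_eq_dist hRne p₀
  set qc : H := lam • (qR - e) with hqc_def
  have hqcK : ∀ j : ι', ⟪C j, qc⟫ ≤ 0 := by
    intro j
    rw [hC, hqc_def, real_inner_smul_right, inner_sub_right]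
    have h1 : ⟪c j.1, qR⟫ ≤ d j.1 := by rw [hR] at hqRR; exact hqRR j.1
    have h2 : ⟪c j.1, e⟫ = d j.1 := j.2
    have : ⟪c j.1, qR⟫ - ⟪c j.1, e⟫ ≤ 0 := by rw [h2]; linarith
    exact mul_nonpos_of_nonneg_of_nonpos hlampos.le this
  have hwq : ‖w - qc‖ ≤ lam * t := by
    have h1 : w - qc = lam • (p₀ - qR) := by
      rw [hw_def, hqc_def]; module
    rw [h1, norm_smul, Real.norm_eq_abs, abs_of_pos hlampos, ← dist_eq_norm, ← hqRdist]
  -- distance to the cone intersection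
  set K : Set H := {z : H | (∀ i : ι, ⟪A i, z⟫ ≤ 0) ∧ (∀ j : ι', ⟪C j, z⟫ ≤ 0)} with hK
  have hKne : K.Nonempty := by
    refine ⟨0, fun i => ?_, fun j => ?_⟩ <;> rw [inner_zero_right]
  have hinfK : lam * s ≤ infDist w K := by
    apply le_infDist' hKne
    intro z hz
    rw [dist_eq_norm]
    rcases le_or_gt ρ ‖z‖ with hcase | hcase
    · have h1 : ‖z‖ - ‖w‖ ≤ ‖z - w‖ := norm_sub_norm_le _ _
      rw [norm_sub_rev z w] at h1
      have h2 : ‖w‖ = lam * s := hwnorm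
      linarith
    · have hez : (e + z) ∈ P ∩ R := by
        apply hρ z hcase.le
        · intro i hact; exact hz.1 ⟨i, hact⟩
        · intro j hact; exact hz.2 ⟨j, hact⟩
      have h3 : ⟪p₀ - e, z⟫ ≤ 0 := by
        have := hproj (e + z) hez
        simpa using this
      have h4 : ⟪w, z⟫ ≤ 0 := by
        rw [hw_def, real_inner_smul_left]
        exact mul_nonpos_of_nonneg_of_nonpos hlampos.le h3
      have h5 : ‖w - z‖ ^ 2 = ‖w‖ ^ 2 - 2 * ⟪w, z⟫ + ‖z‖ ^ 2 := norm_sub_sq_real w z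
      have h6 : (lam * s) ^ 2 ≤ ‖w - z‖ ^ 2 := by
        rw [h5, hwnorm]
        nlinarith [sq_nonneg ‖z‖]
      nlinarith [norm_nonneg (w - z), mul_pos hlampos hs]
  -- apply the core lemma
  obtain ⟨p₂, q₂, hp₂, hq₂, hfr⟩ := core A C
    (Fintype.card ι + Fintype.card ι') w qc (lam * s) (lam * t)
    (mul_pos hlampos hs) (mul_pos hlampos ht) hwKP hqcK
    (by
      apply add_le_add
      · exact le_trans (Finset.card_filter_le _ _) (le_of_eq (Finset.card_univ))
      · exact le_trans (Finset.card_filter_le _ _) (le_of_eq (Finset.card_univ)))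
    hwq hinfK
  have hscale : (lam * t) ^ 2 / (lam * s) ^ 2 = t ^ 2 / s ^ 2 := by
    rw [mul_pow, mul_pow, mul_div_mul_left _ _ (pow_ne_zero 2 (ne_of_gt hlampos))]
  rw [hscale] at hfr
  refine ⟨e, p₂, q₂, heE, ?_, ?_, ?_⟩
  · intro i hact; exact hp₂ ⟨i, hact⟩
  · intro j hact; exact hq₂ ⟨j, hact⟩
  · have hker1 : kerSet A {i : ι | ⟪A i, p₂⟫ = 0}
        = kerSet a {i | ⟪a i, e⟫ = b i ∧ ⟪a i, p₂⟫ = 0} := by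
      apply le_antisymm
      · intro z hz i hi
        exact hz ⟨i, hi.1⟩ hi.2
      · intro z hz i hi
        exact hz i.1 ⟨i.2, hi⟩
    have hker2 : kerSet C {j : ι' | ⟪C j, q₂⟫ = 0}
        = kerSet c {j | ⟪c j, e⟫ = d j ∧ ⟪c j, q₂⟫ = 0} := by
      apply le_antisymm
      · intro z hz j hj
        exact hz ⟨j, hj.1⟩ hj.2
      · intro z hz j hj
        exact hz j.1 ⟨j.2, hj⟩
    rw [← hker1, ← hker2]
    exact hfr

end Reduction


section Echar
variable {H : Type*} [NormedAddCommGroup H] [InnerProductSpace ℝ H]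
  [FiniteDimensional ℝ H] [ProperSpace H]

lemma E_eq {n m : ℕ} (a : Fin n → H) (b : Fin n → ℝ) (c : Fin m → H) (d : Fin m → ℝ)
    (P Q : Set H) (hP : P = {z : H | ∀ i, ⟪a i, z⟫ ≤ b i})
    (hQ : Q = {z : H | ∀ j, ⟪c j, z⟫ ≤ d j})
    (hPne : P.Nonempty) (hQne : Q.Nonempty)
    (v : H) (hv : IsProjOn (closure (Q - P)) 0 v) :
    {p ∈ P | infDist p Q = sDist P Q} = P ∩ ((fun q => q - v) '' Q) := by
  have hQcl : IsClosed Q := hQ ▸ poly_closed c d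
  have hPconv : Convex ℝ P := hP ▸ poly_convex a b
  have hQconv : Convex ℝ Q := hQ ▸ poly_convex c d
  have hvC : v ∈ closure (Q - P) := hv.1
  have hvmin : ∀ z ∈ closure (Q - P), ‖v‖ ≤ ‖z‖ := by
    intro z hz
    have := hv.2 z hz
    simpa [dist_eq_norm] using this
  have hlow : ∀ p ∈ P, ∀ q ∈ Q, ‖v‖ ≤ dist p q := by
    intro p hp q hq
    have h1 : q - p ∈ closure (Q - P) := subset_closure (Set.sub_mem_sub hq hp)
    have h2 := hvmin _ h1
    rwa [dist_eq_norm, norm_sub_rev]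
  have hbdd : BddBelow (Set.image2 dist P Q) := by
    refine ⟨0, ?_⟩
    rintro r ⟨p, hp, q, hq, rfl⟩
    exact dist_nonneg
  have hsd : sDist P Q = ‖v‖ := by
    apply le_antisymm
    · unfold sDist
      apply le_of_forall_pos_le_add
      intro ε hε
      obtain ⟨w, hwQP, hwd⟩ := Metric.mem_closure_iff.1 hvC ε hε
      obtain ⟨q, hq, p, hp, rfl⟩ := Set.mem_sub.1 hwQP
      have h3 : sInf (Set.image2 dist P Q) ≤ dist p q :=
        csInf_le hbdd (Set.mem_image2_of_mem hp hq)
      have h4 : dist p q ≤ ‖v‖ + ε := by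
        rw [dist_eq_norm, norm_sub_rev]
        have h5 : q - p = v + ((q - p) - v) := by abel
        calc ‖q - p‖ = ‖v + ((q - p) - v)‖ := by rw [← h5]
        _ ≤ ‖v‖ + ‖(q - p) - v‖ := norm_add_le _ _
        _ ≤ ‖v‖ + ε := by
            have := hwd
            rw [dist_comm, dist_eq_norm] at this
            linarith
      linarith
    · unfold sDist
      apply le_csInf (hPne.image2 hQne)
      rintro r ⟨p, hp, q, hq, rfl⟩
      exact hlow p hp q hq
  ext p
  constructor
  · rintro ⟨hpP, hpd⟩
    rw [hsd] at hpd
    obtain ⟨q₁, hq₁Q, hq₁d⟩ := hQcl.exists_infDist_eq_dist hQne p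
    have h6 : ‖q₁ - p‖ = ‖v‖ := by
      rw [← hpd, hq₁d, dist_eq_norm, norm_sub_rev]
    have h7 : q₁ - p = v :=
      min_norm_unique (hQconv.sub hPconv).closure hvC
        (subset_closure (Set.sub_mem_sub hq₁Q hpP)) hvmin h6
    refine ⟨hpP, q₁, hq₁Q, ?_⟩
    show q₁ - v = p
    rw [← h7]; abel
  · rintro ⟨hpP, q₁, hq₁Q, hq₁e⟩
    have hq₁e' : q₁ - v = p := hq₁e
    refine ⟨hpP, ?_⟩
    rw [hsd]
    apply le_antisymm
    · have h8 : dist p q₁ = ‖v‖ := by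
        rw [dist_eq_norm]
        have h9 : p - q₁ = -v := by rw [← hq₁e']; abel
        rw [h9, norm_neg]
      rw [← h8]
      exact infDist_le_dist_of_mem hq₁Q
    · exact le_infDist' hQne fun q hq => hlow p hpP q hq

end Echar


theorem stmt2 {D : ℕ} (P Q : Set (EuclideanSpace ℝ (Fin D)))
    (hPpoly : IsPolyhedron P) (hQpoly : IsPolyhedron Q)
    (hPne : P.Nonempty) (hQne : Q.Nonempty)
    (v : EuclideanSpace ℝ (Fin D)) (hv : IsProjOn (closure (Q - P)) 0 v)
    (E Q' : Set (EuclideanSpace ℝ (Fin D)))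
    (hE : E = {p ∈ P | infDist p Q = sDist P Q})
    (hQ' : Q' = (fun q => q - v) '' Q)
    (hEne : E.Nonempty)
    (κ : EuclideanSpace ℝ (Fin D) → ℝ)
    (hκ : ∀ x, κ x = infDist x E / max (infDist x P) (infDist x Q')) :
    (∀ p ∈ P \ E, ∃ x y : EuclideanSpace ℝ (Fin D),
        (face P x).Nonempty ∧ (face Q y).Nonempty ∧
        1 - (κ p ^ 2)⁻¹ ≤ friedrichs (aff0 (face P x)) (aff0 (face Q y)) ^ 2) ∧
    (∀ q ∈ Q' \ E, ∃ x y : EuclideanSpace ℝ (Fin D),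
        (face P x).Nonempty ∧ (face Q y).Nonempty ∧
        1 - (κ q ^ 2)⁻¹ ≤ friedrichs (aff0 (face P x)) (aff0 (face Q y)) ^ 2) := by
  classical
  obtain ⟨n, a, b, haP⟩ := hPpoly
  obtain ⟨m, c, d0, hcQ⟩ := hQpoly
  have hEeq : E = P ∩ Q' := by
    rw [hE, hQ']
    exact E_eq a b c d0 P Q haP hcQ hPne hQne v hv
  set d' : Fin m → ℝ := fun j => d0 j - ⟪c j, v⟫ with hd'
  have hQ'eq : Q' = {z | ∀ j, ⟪c j, z⟫ ≤ d' j} := by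
    rw [hQ', hcQ]
    ext z
    constructor
    · rintro ⟨q, hq, rfl⟩ j
      have h1 := hq j
      show ⟪c j, q - v⟫ ≤ d' j
      rw [hd', inner_sub_right]
      show ⟪c j, q⟫ - ⟪c j, v⟫ ≤ d0 j - ⟪c j, v⟫
      linarith
    · intro hz
      refine ⟨z + v, fun j => ?_, by show z + v - v = z; abel⟩
      have h1 := hz j
      rw [hd'] at h1
      have h1' : ⟪c j, z⟫ ≤ d0 j - ⟪c j, v⟫ := h1
      rw [inner_add_right]
      linarith
  constructor
  · -- first clause
    intro p₀ hp₀
    have hp₀P : p₀ ∈ P := hp₀.1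
    have hp₀E : p₀ ∉ P ∩ Q' := by rw [← hEeq]; exact hp₀.2
    obtain ⟨e, ph, qh, heE, hph, hqh, hfr⟩ :=
      reduction a b c d' haP hQ'eq hp₀P hp₀E (hEeq ▸ hEne)
    obtain ⟨x, hxne, hxaff⟩ := faceRecon a b P haP e heE.1 ph hph
    obtain ⟨q₂, hq₂Q, hq₂e⟩ := (hQ' ▸ heE.2 : e ∈ (fun q => q - v) '' Q)
    have hq₂e' : q₂ - v = e := hq₂e
    have heQ : e + v ∈ Q := by
      rw [← hq₂e', sub_add_cancel]; exact hq₂Q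
    have hact : ∀ j, (⟪c j, e + v⟫ = d0 j ↔ ⟪c j, e⟫ = d' j) := by
      intro j
      rw [inner_add_right, hd']
      show ⟪c j, e⟫ + ⟪c j, v⟫ = d0 j ↔ ⟪c j, e⟫ = d0 j - ⟪c j, v⟫
      constructor <;> intro h <;> linarith
    have hqh' : ∀ j, ⟪c j, e + v⟫ = d0 j → ⟪c j, qh⟫ ≤ 0 :=
      fun j h => hqh j ((hact j).1 h)
    obtain ⟨y, hyne, hyaff⟩ := faceRecon c d0 Q hcQ (e + v) heQ qh hqh'
    have hsets : {j | ⟪c j, e + v⟫ = d0 j ∧ ⟪c j, qh⟫ = 0}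
        = {j | ⟪c j, e⟫ = d' j ∧ ⟪c j, qh⟫ = 0} := by
      ext j
      exact and_congr_left fun _ => hact j
    rw [hsets] at hyaff
    refine ⟨x, y, hxne, hyne, ?_⟩
    rw [hxaff, hyaff]
    have hinfP : infDist p₀ P = 0 := infDist_zero_of_mem hp₀P
    have hκp : κ p₀ = infDist p₀ (P ∩ Q') / infDist p₀ Q' := by
      rw [hκ p₀, hinfP, max_eq_right infDist_nonneg, hEeq]
    have hinv : (κ p₀ ^ 2)⁻¹
        = (infDist p₀ Q') ^ 2 / (infDist p₀ (P ∩ Q')) ^ 2 := by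
      rw [hκp, div_pow, inv_div]
    rw [hinv]
    exact hfr
  · -- second clause
    intro p₀ hp₀
    have hp₀Q : p₀ ∈ Q' := hp₀.1
    have hp₀E : p₀ ∉ Q' ∩ P := by rw [Set.inter_comm, ← hEeq]; exact hp₀.2
    obtain ⟨e, qh, ph, heE', hqh, hph, hfr⟩ :=
      reduction c d' a b hQ'eq haP hp₀Q hp₀E
        (by rw [Set.inter_comm, ← hEeq]; exact hEne)
    obtain ⟨x, hxne, hxaff⟩ := faceRecon a b P haP e heE'.2 ph hph
    obtain ⟨q₂, hq₂Q, hq₂e⟩ := (hQ' ▸ heE'.1 : e ∈ (fun q => q - v) '' Q)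
    have hq₂e' : q₂ - v = e := hq₂e
    have heQ : e + v ∈ Q := by
      rw [← hq₂e', sub_add_cancel]; exact hq₂Q
    have hact : ∀ j, (⟪c j, e + v⟫ = d0 j ↔ ⟪c j, e⟫ = d' j) := by
      intro j
      rw [inner_add_right, hd']
      show ⟪c j, e⟫ + ⟪c j, v⟫ = d0 j ↔ ⟪c j, e⟫ = d0 j - ⟪c j, v⟫
      constructor <;> intro h <;> linarith
    have hqh' : ∀ j, ⟪c j, e + v⟫ = d0 j → ⟪c j, qh⟫ ≤ 0 :=
      fun j h => hqh j ((hact j).1 h)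
    obtain ⟨y, hyne, hyaff⟩ := faceRecon c d0 Q hcQ (e + v) heQ qh hqh'
    have hsets : {j | ⟪c j, e + v⟫ = d0 j ∧ ⟪c j, qh⟫ = 0}
        = {j | ⟪c j, e⟫ = d' j ∧ ⟪c j, qh⟫ = 0} := by
      ext j
      exact and_congr_left fun _ => hact j
    rw [hsets] at hyaff
    refine ⟨x, y, hxne, hyne, ?_⟩
    rw [hxaff, hyaff]
    have hinfQ : infDist p₀ Q' = 0 := infDist_zero_of_mem hp₀Q
    have hκp : κ p₀ = infDist p₀ (Q' ∩ P) / infDist p₀ P := by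
      rw [hκ p₀, hinfQ, max_eq_left infDist_nonneg, hEeq, Set.inter_comm]
    have hinv : (κ p₀ ^ 2)⁻¹
        = (infDist p₀ P) ^ 2 / (infDist p₀ (Q' ∩ P)) ^ 2 := by
      rw [hκp, div_pow, inv_div]
    rw [hinv, friedrichs_comm]
    exact hfr
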